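/- For integers k ≥ 2 and n ≥ 2k and any element j ∈ {1,...,n}, and any k-subset A of {1,...,n} with j ∉ A, the number of stable k-subsets B of {1,...,n} with j ∈ B and B ∩ A ≠ ∅ is at most k·C(n-k-2, k-2). -/

import Mathlib

open Finset

attribute [local instance] Classical.propDecidable

/-- `A` is a stable subset of `{1,...,n}`: no two cyclically consecutive elements. -/
def Stable (n : ℕ) (A : Finset ℕ) : Prop :=
  (∀ i ∈ A, i + 1 ∉ A) ∧ ¬(1 ∈ A ∧ n ∈ A)

/-- The collection of stable `k`-subsets of `{1,...,n}`. -/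
noncomputable def stableSets (n k : ℕ) : Finset (Finset ℕ) :=
  ((Finset.Icc 1 n).powersetCard k).filter (fun A => Stable n A)

/-- Path-stability: no two consecutive elements. -/
def PathStable (D : Finset ℕ) : Prop := ∀ x ∈ D, x + 1 ∉ D

lemma pathStable_subset {C D : Finset ℕ} (h : PathStable D) (hCD : C ⊆ D) : PathStable C :=
  fun x hx hx1 => h x (hCD hx) (hCD hx1)

/-- The number of path-stable `t`-subsets of `[a,b]` is at most `C(b+2-a-t, t)`. -/
lemma path_count : ∀ b a t : ℕ, 1 ≤ a →
    (((Finset.Icc a b).powersetCard t).filter PathStable).card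
      ≤ Nat.choose (b + 2 - a - t) t := by
  intro b
  induction b using Nat.strong_induction_on with
  | _ b IH =>
    intro a t ha
    match t with
    | 0 =>
      have h1 : (((Finset.Icc a b).powersetCard 0).filter PathStable).card ≤ 1 := by
        refine (Finset.card_filter_le _ _).trans ?_
        simp
      simpa using h1
    | (t+1) =>
      by_cases hab : a + t ≤ b
      · -- main case
        set S := ((Finset.Icc a b).powersetCard (t+1)).filter PathStable with hS
        have hb1 : 1 ≤ b := by omega
        have hsplit : (S.filter (fun B => b ∈ B)).card
            + (S.filter (fun B => ¬ b ∈ B)).card = S.card :=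
          Finset.card_filter_add_card_filter_not _
        -- branch: b ∉ B
        have hnotb : S.filter (fun B => ¬ b ∈ B)
            ⊆ ((Finset.Icc a (b-1)).powersetCard (t+1)).filter PathStable := by
          intro B hB
          simp only [hS, Finset.mem_filter, Finset.mem_powersetCard] at hB ⊢
          obtain ⟨⟨⟨hBsub, hBcard⟩, hBst⟩, hbB⟩ := hB
          refine ⟨⟨?_, hBcard⟩, hBst⟩
          intro x hx
          have h1 := hBsub hx
          simp only [Finset.mem_Icc] at h1 ⊢
          have h2 : x ≠ b := fun h => hbB (h ▸ hx)
          omega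
        -- branch: b ∈ B, via erasing b
        have hinb : (S.filter (fun B => b ∈ B)).card
            ≤ (((Finset.Icc a (b-2)).powersetCard t).filter PathStable).card := by
          apply Finset.card_le_card_of_injOn (fun B => B.erase b)
          · intro B hB
            simp only [hS, Finset.mem_coe, Finset.mem_filter, Finset.mem_powersetCard] at hB ⊢
            obtain ⟨⟨⟨hBsub, hBcard⟩, hBst⟩, hbB⟩ := hB
            have hb1B : b - 1 ∉ B := by
              intro hmem
              apply hBst (b-1) hmem
              have : b - 1 + 1 = b := by omega
              rwa [this]
            refine ⟨⟨?_, ?_⟩, pathStable_subset hBst (Finset.erase_subset _ _)⟩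
            · intro x hx
              have hxB := Finset.mem_of_mem_erase hx
              have hxne := Finset.ne_of_mem_erase hx
              have h1 := hBsub hxB
              simp only [Finset.mem_Icc] at h1 ⊢
              have h2 : x ≠ b - 1 := fun h => hb1B (h ▸ hxB)
              omega
            · rw [Finset.card_erase_of_mem hbB, hBcard]
              omega
          · intro B1 h1 B2 h2 heq
            simp only [Finset.coe_filter, Set.mem_setOf_eq] at h1 h2
            rw [← Finset.insert_erase h1.2, ← Finset.insert_erase h2.2]
            exact congrArg (insert b) heq
        have IH1 := IH (b-1) (by omega) a (t+1) ha
        have IH2 := IH (b-2) (by omega) a t ha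
        have key1 : (S.filter (fun B => ¬ b ∈ B)).card ≤ Nat.choose (b - a - t) (t+1) := by
          refine (Finset.card_le_card hnotb).trans (IH1.trans ?_)
          have e1 : (b - 1) + 2 - a - (t+1) = b - a - t := by omega
          rw [e1]
        have key2 : (S.filter (fun B => b ∈ B)).card ≤ Nat.choose (b - a - t) t := by
          rcases le_or_gt 2 b with h2 | h2
          · have e2 : (b - 2) + 2 - a - t = b - a - t := by omega
            refine hinb.trans (IH2.trans ?_)
            rw [e2]
          · -- b = 1, a = 1, t = 0
            have hb : b = 1 := by omega
            have haa : a = 1 := by omega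
            have ht : t = 0 := by omega
            subst hb; subst haa; subst ht
            refine hinb.trans ?_
            refine (Finset.card_filter_le _ _).trans ?_
            simp
        have e3 : b + 2 - a - (t+1) = (b - a - t) + 1 := by omega
        rw [e3, Nat.choose_succ_succ']
        omega
      · -- interval too short
        have hcard : (Finset.Icc a b).card < t + 1 := by
          rw [Nat.card_Icc]; omega
        rw [Finset.powersetCard_eq_empty.mpr hcard]
        simp

/-- Cyclic stability in terms of the successor `x % n + 1`. -/
lemma stable_iff_mod {n : ℕ} (hn : 1 ≤ n) {A : Finset ℕ} (hA : A ⊆ Finset.Icc 1 n) :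
    Stable n A ↔ ∀ x ∈ A, x % n + 1 ∉ A := by
  constructor
  · rintro ⟨h1, h2⟩ x hx hx'
    have hxm : x ∈ Finset.Icc 1 n := hA hx
    simp only [Finset.mem_Icc] at hxm
    rcases eq_or_lt_of_le hxm.2 with heq | hlt
    · rw [heq, Nat.mod_self] at hx'
      exact h2 ⟨hx', heq ▸ hx⟩
    · rw [Nat.mod_eq_of_lt hlt] at hx'
      exact h1 x hx hx'
  · intro h
    constructor
    · intro x hx hx'
      have hxm := hA hx
      have hxm' := hA hx'
      simp only [Finset.mem_Icc] at hxm hxm'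
      have hlt : x < n := by omega
      have h3 := h x hx
      rw [Nat.mod_eq_of_lt hlt] at h3
      exact h3 hx'
    · rintro ⟨h1, hn'⟩
      have h3 := h n hn'
      rw [Nat.mod_self] at h3
      exact h3 h1

/-- Merging the two arcs around `j'` into a single path. -/
lemma squeeze (j' M : ℕ) (hj2 : 2 ≤ j') (hjM : j' ≤ M) (E : Finset ℕ)
    (hE : ∀ x ∈ E, (2 ≤ x ∧ x ≤ j' - 2) ∨ (j' + 2 ≤ x ∧ x ≤ M))
    (hEp : PathStable E) :
    (E.image (fun x => if x < j' then x else x - 2) ⊆ Finset.Icc 2 (M - 2)) ∧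
    PathStable (E.image (fun x => if x < j' then x else x - 2)) ∧
    (E.image (fun x => if x < j' then x else x - 2)).card = E.card ∧
    (E.image (fun x => if x < j' then x else x - 2)).image
      (fun u => if u < j' then u else u + 2) = E := by
  have hrec : (E.image (fun x => if x < j' then x else x - 2)).image
      (fun u => if u < j' then u else u + 2) = E := by
    rw [Finset.image_image]
    have heq : Set.EqOn ((fun u => if u < j' then u else u + 2) ∘
        (fun x => if x < j' then x else x - 2)) id (↑E : Set ℕ) := by
      intro x hx
      rcases hE x hx with ⟨h1, h2⟩ | ⟨h1, h2⟩
      · simp only [Function.comp, id]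
        rw [if_pos (show x < j' by omega), if_pos (show x < j' by omega)]
      · simp only [Function.comp, id]
        rw [if_neg (show ¬ x < j' by omega), if_neg (show ¬ x - 2 < j' by omega)]
        omega
    rw [Finset.image_congr heq, Finset.image_id]
  refine ⟨?_, ?_, ?_, hrec⟩
  · intro y hy
    rw [Finset.mem_image] at hy
    obtain ⟨x, hx, rfl⟩ := hy
    show (if x < j' then x else x - 2) ∈ Finset.Icc 2 (M - 2)
    rw [Finset.mem_Icc]
    rcases hE x hx with ⟨h1, h2⟩ | ⟨h1, h2⟩ <;> split_ifs <;> omega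
  · intro u hu hu1
    rw [Finset.mem_image] at hu hu1
    obtain ⟨x, hx, hxu⟩ := hu
    obtain ⟨y, hy, hyu⟩ := hu1
    rcases hE x hx with ⟨hx1, hx2⟩ | ⟨hx1, hx2⟩ <;>
      rcases hE y hy with ⟨hy1, hy2⟩ | ⟨hy1, hy2⟩
    · rw [if_pos (by omega)] at hxu
      rw [if_pos (by omega)] at hyu
      have : y = x + 1 := by omega
      exact hEp x hx (this ▸ hy)
    · rw [if_pos (by omega)] at hxu
      rw [if_neg (by omega)] at hyu
      omega
    · rw [if_neg (by omega)] at hxu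
      rw [if_pos (by omega)] at hyu
      omega
    · rw [if_neg (by omega)] at hxu
      rw [if_neg (by omega)] at hyu
      have : y = x + 1 := by omega
      exact hEp x hx (this ▸ hy)
  · have h1 := Finset.card_image_le (s := E) (f := fun x => if x < j' then x else x - 2)
    have h2 := Finset.card_image_le
      (s := E.image (fun x => if x < j' then x else x - 2))
      (f := fun u => if u < j' then u else u + 2)
    rw [hrec] at h2
    omega

/-- The number of stable `k`-subsets of `{1,...,n}` containing two fixed distinct
elements `i, j` is at most `C(n-k-2, k-2)`. -/
lemma pair_bound (n k : ℕ) (hk : 2 ≤ k) (hn : 2 * k ≤ n) (i j : ℕ)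
    (hi : i ∈ Finset.Icc 1 n) (hj : j ∈ Finset.Icc 1 n) (hij : i ≠ j) :
    ((stableSets n k).filter (fun B => i ∈ B ∧ j ∈ B)).card
      ≤ Nat.choose (n - k - 2) (k - 2) := by
  simp only [Finset.mem_Icc] at hi hj
  have hn4 : 4 ≤ n := by omega
  have hnpos : 0 < n := by omega
  set c := n - i with hc
  set h : ℕ → ℕ := fun x => (x - 1 + c) % n + 1 with hh
  have hmem : ∀ x, h x ∈ Finset.Icc 1 n := by
    intro x
    simp only [hh, Finset.mem_Icc]
    have := Nat.mod_lt (x - 1 + c) hnpos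
    omega
  have hinj : ∀ x, 1 ≤ x → x ≤ n → ∀ y, 1 ≤ y → y ≤ n → h x = h y → x = y := by
    intro x hx1 hx2 y hy1 hy2 hxy
    simp only [hh] at hxy
    have hmod : (x - 1 + c) ≡ (y - 1 + c) [MOD n] := by
      unfold Nat.ModEq
      omega
    have h2 := (Nat.ModEq.add_right_cancel' c) hmod
    have hx' : (x - 1) % n = (y - 1) % n := h2
    rw [Nat.mod_eq_of_lt (by omega), Nat.mod_eq_of_lt (by omega)] at hx'
    omega
  have hsucc : ∀ x, 1 ≤ x → h (x % n + 1) = h x % n + 1 := by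
    intro x hx
    show ((x % n + 1) - 1 + c) % n + 1 = ((x - 1 + c) % n + 1) % n + 1
    have l1 : (x % n + 1) - 1 + c = x % n + c := by omega
    have l2 : (x % n + c) % n = (x + c) % n := Nat.mod_add_mod x n c
    have r1 : ((x - 1 + c) % n + 1) % n = (x - 1 + c + 1) % n := Nat.mod_add_mod _ n 1
    have r2 : x - 1 + c + 1 = x + c := by omega
    rw [l1, l2, r1, r2]
  have hhi : h i = n := by
    show (i - 1 + c) % n + 1 = n
    have e : i - 1 + c = n - 1 := by omega
    rw [e, Nat.mod_eq_of_lt (by omega)]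
    omega
  set j' := h j with hj'def
  have hj'mem : j' ∈ Finset.Icc 1 n := hmem j
  have hj'n : j' ≠ n := by
    intro hEq
    exact hij (hinj i hi.1 hi.2 j hj.1 hj.2 (hhi.trans (hEq.symm.trans hj'def)))
  -- Step 1: rotate so that i ↦ n
  have step1 : ((stableSets n k).filter (fun B => i ∈ B ∧ j ∈ B)).card
      ≤ ((stableSets n k).filter (fun B => n ∈ B ∧ j' ∈ B)).card := by
    apply Finset.card_le_card_of_injOn (fun B => B.image h)
    · intro B hB
      simp only [stableSets, Finset.mem_coe, Finset.mem_filter, Finset.mem_powersetCard] at hB ⊢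
      obtain ⟨⟨⟨hBsub, hBcard⟩, hBst⟩, hiB, hjB⟩ := hB
      have himg : B.image h ⊆ Finset.Icc 1 n := by
        intro y hy
        rw [Finset.mem_image] at hy
        obtain ⟨x, _, rfl⟩ := hy
        exact hmem x
      have hBmem : ∀ x ∈ B, 1 ≤ x ∧ x ≤ n := by
        intro x hx
        have := hBsub hx
        simpa [Finset.mem_Icc] using this
      refine ⟨⟨⟨himg, ?_⟩, ?_⟩, ?_, ?_⟩
      · rw [Finset.card_image_of_injOn, hBcard]
        intro x hx y hy hxy
        exact hinj x (hBmem x hx).1 (hBmem x hx).2 y (hBmem y hy).1 (hBmem y hy).2 hxy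
      · rw [stable_iff_mod (by omega) himg]
        intro y hy hy'
        rw [Finset.mem_image] at hy hy'
        obtain ⟨x, hxB, rfl⟩ := hy
        obtain ⟨z, hzB, hz⟩ := hy'
        have hx1 : 1 ≤ x := (hBmem x hxB).1
        have heq : h z = h (x % n + 1) := by rw [hsucc x hx1]; exact hz
        have hxmod1 : 1 ≤ x % n + 1 := by omega
        have hxmod2 : x % n + 1 ≤ n := by
          have := Nat.mod_lt x hnpos
          omega
        have hzeq := hinj z (hBmem z hzB).1 (hBmem z hzB).2 (x % n + 1) hxmod1 hxmod2 heq
        rw [stable_iff_mod (by omega) hBsub] at hBst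
        exact hBst x hxB (hzeq ▸ hzB)
      · rw [← hhi]
        exact Finset.mem_image_of_mem h hiB
      · exact Finset.mem_image_of_mem h hjB
    · intro B1 h1 B2 h2 heq
      have heq' : B1.image h = B2.image h := heq
      simp only [Finset.coe_filter, Set.mem_setOf_eq] at h1 h2
      have hs1 : B1 ⊆ Finset.Icc 1 n := by
        have := h1.1
        simp only [stableSets, Finset.mem_filter, Finset.mem_powersetCard] at this
        exact this.1.1
      have hs2 : B2 ⊆ Finset.Icc 1 n := by
        have := h2.1
        simp only [stableSets, Finset.mem_filter, Finset.mem_powersetCard] at this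
        exact this.1.1
      have hmm : ∀ x, x ∈ Finset.Icc 1 n → 1 ≤ x ∧ x ≤ n := by
        intro x hx; simpa [Finset.mem_Icc] using hx
      ext x
      constructor
      · intro hx
        have : h x ∈ B2.image h := by
          rw [← heq']
          exact Finset.mem_image_of_mem h hx
        rw [Finset.mem_image] at this
        obtain ⟨y, hy, hxy⟩ := this
        have := hinj y (hmm y (hs2 hy)).1 (hmm y (hs2 hy)).2 x (hmm x (hs1 hx)).1
          (hmm x (hs1 hx)).2 hxy
        exact this ▸ hy
      · intro hx
        have : h x ∈ B1.image h := by
          rw [heq']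
          exact Finset.mem_image_of_mem h hx
        rw [Finset.mem_image] at this
        obtain ⟨y, hy, hxy⟩ := this
        have := hinj y (hmm y (hs1 hy)).1 (hmm y (hs1 hy)).2 x (hmm x (hs2 hx)).1
          (hmm x (hs2 hx)).2 hxy
        exact this ▸ hy
  -- facts about members of the rotated family
  have hfacts : ∀ B' ∈ (stableSets n k).filter (fun B => n ∈ B ∧ j' ∈ B),
      n ∈ B' ∧ j' ∈ B'.erase n ∧ ((B'.erase n).erase j').card = k - 2 ∧
      PathStable ((B'.erase n).erase j') ∧
      (∀ x ∈ (B'.erase n).erase j', (2 ≤ x ∧ x ≤ j' - 2) ∨ (j' + 2 ≤ x ∧ x ≤ n - 2)) ∧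
      2 ≤ j' ∧ j' ≤ n - 2 := by
    intro B' hB'
    simp only [stableSets, Finset.mem_filter, Finset.mem_powersetCard] at hB'
    obtain ⟨⟨⟨hsub, hcard⟩, hst⟩, hnB, hjB⟩ := hB'
    obtain ⟨hst1, hst2⟩ := hst
    have h1B : 1 ∉ B' := fun h1 => hst2 ⟨h1, hnB⟩
    have hn1B : n - 1 ∉ B' := by
      intro hmem'
      apply hst1 (n-1) hmem'
      have e : n - 1 + 1 = n := by omega
      rwa [e]
    have hCsub : ∀ x ∈ B'.erase n, 2 ≤ x ∧ x ≤ n - 2 := by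
      intro x hx
      have hxB := Finset.mem_of_mem_erase hx
      have hxn := Finset.ne_of_mem_erase hx
      have hxI := hsub hxB
      simp only [Finset.mem_Icc] at hxI
      have hx1 : x ≠ 1 := fun he => h1B (he ▸ hxB)
      have hxn1 : x ≠ n - 1 := fun he => hn1B (he ▸ hxB)
      omega
    have hj'C : j' ∈ B'.erase n := Finset.mem_erase.mpr ⟨hj'n, hjB⟩
    have hj'b := hCsub j' hj'C
    have hCpath : PathStable (B'.erase n) := pathStable_subset hst1 (Finset.erase_subset _ _)
    have hjp1 : j' + 1 ∉ B'.erase n := hCpath j' hj'C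
    have hjm1 : j' - 1 ∉ B'.erase n := by
      intro hmem'
      apply hCpath (j'-1) hmem'
      have e : j' - 1 + 1 = j' := by omega
      rwa [e]
    refine ⟨hnB, hj'C, ?_, pathStable_subset hCpath (Finset.erase_subset _ _), ?_,
      hj'b.1, hj'b.2⟩
    · rw [Finset.card_erase_of_mem hj'C, Finset.card_erase_of_mem hnB, hcard]
      omega
    · intro x hx
      have hxC := Finset.mem_of_mem_erase hx
      have hxj := Finset.ne_of_mem_erase hx
      have hb := hCsub x hxC
      have hxp : x ≠ j' + 1 := fun he => hjp1 (he ▸ hxC)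
      have hxm : x ≠ j' - 1 := fun he => hjm1 (he ▸ hxC)
      omega
  -- Step 2: strip n and j' and merge the two arcs
  have step2 : ((stableSets n k).filter (fun B => n ∈ B ∧ j' ∈ B)).card
      ≤ (((Finset.Icc 2 (n-4)).powersetCard (k-2)).filter PathStable).card := by
    apply Finset.card_le_card_of_injOn
      (fun B => ((B.erase n).erase j').image (fun x => if x < j' then x else x - 2))
    · intro B' hB'
      obtain ⟨hnB, hj'C, hEcard, hEpath, hEmem, hj2, hjn2⟩ := hfacts B' hB'
      obtain ⟨hsubT, hpathT, hcardT, _⟩ := squeeze j' (n-2) hj2 hjn2 _ hEmem hEpath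
      simp only [Finset.mem_coe, Finset.mem_filter, Finset.mem_powersetCard]
      have e : n - 2 - 2 = n - 4 := by omega
      rw [e] at hsubT
      exact ⟨⟨hsubT, by rw [hcardT, hEcard]⟩, hpathT⟩
    · intro B1 hB1 B2 hB2 heq
      obtain ⟨hnB1, hj'C1, _, hEpath1, hEmem1, hj2, hjn2⟩ := hfacts B1 (Finset.mem_coe.mp hB1)
      obtain ⟨hnB2, hj'C2, _, hEpath2, hEmem2, _, _⟩ := hfacts B2 (Finset.mem_coe.mp hB2)
      have hr1 := (squeeze j' (n-2) hj2 hjn2 _ hEmem1 hEpath1).2.2.2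
      have hr2 := (squeeze j' (n-2) hj2 hjn2 _ hEmem2 hEpath2).2.2.2
      have hE : (B1.erase n).erase j' = (B2.erase n).erase j' := by
        rw [← hr1, ← hr2]
        exact congrArg (Finset.image (fun u => if u < j' then u else u + 2)) heq
      have hC : B1.erase n = B2.erase n := by
        rw [← Finset.insert_erase hj'C1, ← Finset.insert_erase hj'C2, hE]
      rw [← Finset.insert_erase hnB1, ← Finset.insert_erase hnB2, hC]
  refine step1.trans (step2.trans ?_)
  refine (path_count (n-4) 2 (k-2) (by omega)).trans ?_
  have e : (n - 4) + 2 - 2 - (k - 2) = n - k - 2 := by omega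
  rw [e]

theorem stmt_18 (n k : ℕ) (hk : 2 ≤ k) (hn : 2 * k ≤ n) (j : ℕ)
    (hj : j ∈ Finset.Icc 1 n) (A : Finset ℕ) (hA : A ⊆ Finset.Icc 1 n)
    (hAcard : A.card = k) (hjA : j ∉ A) :
    ((stableSets n k).filter (fun B => j ∈ B ∧ (B ∩ A).Nonempty)).card
      ≤ k * Nat.choose (n - k - 2) (k - 2) := by
  have hsub : (stableSets n k).filter (fun B => j ∈ B ∧ (B ∩ A).Nonempty)
      ⊆ A.biUnion (fun i => (stableSets n k).filter (fun B => i ∈ B ∧ j ∈ B)) := by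
    intro B hB
    simp only [Finset.mem_filter] at hB
    obtain ⟨hBs, hjB, ⟨x, hx⟩⟩ := hB
    rw [Finset.mem_inter] at hx
    rw [Finset.mem_biUnion]
    exact ⟨x, hx.2, Finset.mem_filter.mpr ⟨hBs, hx.1, hjB⟩⟩
  calc ((stableSets n k).filter (fun B => j ∈ B ∧ (B ∩ A).Nonempty)).card
      ≤ (A.biUnion (fun i => (stableSets n k).filter (fun B => i ∈ B ∧ j ∈ B))).card :=
        Finset.card_le_card hsub
    _ ≤ ∑ i ∈ A, ((stableSets n k).filter (fun B => i ∈ B ∧ j ∈ B)).card :=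
        Finset.card_biUnion_le
    _ ≤ A.card * Nat.choose (n - k - 2) (k - 2) := by
        have := Finset.sum_le_card_nsmul A
          (fun i => ((stableSets n k).filter (fun B => i ∈ B ∧ j ∈ B)).card)
          (Nat.choose (n - k - 2) (k - 2))
          (fun i hiA => pair_bound n k hk hn i j (hA hiA) hj (fun he => hjA (he ▸ hiA)))
        simpa [smul_eq_mul] using this
    _ = k * Nat.choose (n - k - 2) (k - 2) := by rw [hAcard]
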